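/- arXiv:1706.06729 — 2 statements merged into one kernel-verified Lean document; each statement's English description precedes it below -/
import Mathlib

section
/- Let H ∈ (0,1), a ≥ 1, T > 0, and set t_a = arctanh(H/a). Let k : [0,T] → ℝ satisfy k(t) ≥ −a² for all t, and let f : [0,T] → ℝ be differentiable with f(0) = H and f′(t) = f(t)² + k(t) for all t ∈ [0,T]. Then f(t) ≥ a·tanh(t_a − a·t) for all t ∈ [0,T]. -/
open Real Set

/-- The inverse hyperbolic tangent. -/
noncomputable def arctanh (x : ℝ) : ℝ := Real.log ((1 + x) / (1 - x)) / 2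

lemma hasDerivAt_tanh' (x : ℝ) : HasDerivAt Real.tanh (1 - Real.tanh x ^ 2) x := by
  have hc : Real.cosh x ≠ 0 := (Real.cosh_pos _).ne'
  have h := (Real.hasDerivAt_sinh x).div (Real.hasDerivAt_cosh x) hc
  have hfun : Real.tanh = fun y => Real.sinh y / Real.cosh y :=
    funext fun y => Real.tanh_eq_sinh_div_cosh y
  rw [hfun]
  refine h.congr_deriv ?_
  have h1 : Real.cosh x ^ 2 - Real.sinh x ^ 2 = 1 := Real.cosh_sq_sub_sinh_sq x
  field_simp

lemma tanh_arctanh' {x : ℝ} (h0 : -1 < x) (h1 : x < 1) : Real.tanh (arctanh x) = x := by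
  set u := arctanh x with hu
  have hy : (0:ℝ) < (1 + x) / (1 - x) := by
    apply div_pos <;> linarith
  have hE2 : Real.exp u ^ 2 = (1 + x) / (1 - x) := by
    rw [← Real.exp_nat_mul]
    rw [hu, arctanh]
    rw [show (2:ℕ) * (Real.log ((1 + x) / (1 - x)) / 2) = Real.log ((1 + x) / (1 - x)) by
      push_cast; ring]
    exact Real.exp_log hy
  have hE : (0:ℝ) < Real.exp u := Real.exp_pos u
  have h1x : (0:ℝ) < 1 - x := by linarith
  rw [Real.tanh_eq_sinh_div_cosh, Real.sinh_eq, Real.cosh_eq, Real.exp_neg]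
  have key : Real.exp u ^ 2 * (1 - x) = 1 + x := by
    rw [hE2]; field_simp
  have hden : (0:ℝ) < Real.exp u + (Real.exp u)⁻¹ := by positivity
  field_simp
  nlinarith [key, hE, hden]

/-- Scalar Riccati comparison for `K ≥ −a²`: if `f(0) = H ∈ (0,1)` and
`f' = f² + k` with `k ≥ −a²`, `a ≥ 1`, on `[0,T]`, then
`f(t) ≥ a·tanh(arctanh(H/a) − a·t)`. -/
theorem riccati_comparison_lower (H : ℝ) (hH0 : 0 < H) (hH1 : H < 1)
    (a : ℝ) (ha : 1 ≤ a) (T : ℝ) (hT : 0 < T)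
    (ta : ℝ) (hta : ta = arctanh (H / a))
    (k : ℝ → ℝ) (hk : ∀ t ∈ Icc (0 : ℝ) T, -a ^ 2 ≤ k t)
    (f : ℝ → ℝ) (hf0 : f 0 = H)
    (hf' : ∀ t ∈ Icc (0 : ℝ) T, HasDerivAt f (f t ^ 2 + k t) t) :
    ∀ t ∈ Icc (0 : ℝ) T, a * Real.tanh (ta - a * t) ≤ f t := by
  have ha0 : (0:ℝ) < a := lt_of_lt_of_le zero_lt_one ha
  set g : ℝ → ℝ := fun t => a * Real.tanh (ta - a * t) with hg
  -- g 0 = H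
  have hg0 : g 0 = H := by
    have hHa0 : (0:ℝ) < H / a := div_pos hH0 ha0
    have hHa1 : H / a < 1 := by rw [div_lt_one ha0]; linarith
    have htt := tanh_arctanh' (by linarith : (-1:ℝ) < H / a) hHa1
    simp only [hg, mul_zero, sub_zero, hta, htt]
    field_simp
  -- derivative of g
  have hg' : ∀ t : ℝ, HasDerivAt g (g t ^ 2 - a ^ 2) t := by
    intro t
    have hlin : HasDerivAt (fun s : ℝ => ta - a * s) (-a) t := by
      simpa [Pi.sub_def] using (hasDerivAt_const t ta).sub ((hasDerivAt_id t).const_mul a)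
    have := ((hasDerivAt_tanh' (ta - a * t)).comp t hlin).const_mul a
    refine this.congr_deriv ?_
    simp only [hg]
    ring
  -- continuity
  have hfc : ContinuousOn f (Icc 0 T) := fun t ht =>
    (hf' t ht).continuousAt.continuousWithinAt
  have hgc : Continuous g := by
    have : Continuous Real.tanh := by
      have := Real.continuous_sinh.div Real.continuous_cosh fun x => (Real.cosh_pos _).ne'
      simpa [funext fun y => (Real.tanh_eq_sinh_div_cosh (x := y)), Pi.div_def] using this
    exact continuous_const.mul (this.comp (continuous_const.sub (continuous_const.mul continuous_id)))
  -- bound on g + f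
  obtain ⟨C, hC⟩ := isCompact_Icc.exists_bound_of_continuousOn
    ((hgc.continuousOn (s := Icc (0:ℝ) T)).add hfc)
  -- main argument by contradiction
  intro t ht
  by_contra hcon
  push_neg at hcon
  set φ : ℝ → ℝ := fun s => g s - f s with hφ
  have hφt : 0 < φ t := by
    have : f t < g t := hcon
    simp only [hφ]; linarith
  have hsub : Icc 0 t ⊆ Icc 0 T := Icc_subset_Icc le_rfl ht.2
  set S : Set ℝ := {s | s ∈ Icc 0 t ∧ φ s ≤ 0} with hS
  have h0S : (0:ℝ) ∈ S := by
    constructor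
    · exact ⟨le_rfl, ht.1⟩
    · simp [hφ, hg0, hf0]
  have hSne : S.Nonempty := ⟨0, h0S⟩
  have hSbdd : BddAbove S := ⟨t, fun s hs => hs.1.2⟩
  set t₀ := sSup S with ht₀
  have ht₀mem : t₀ ∈ Icc 0 t :=
    ⟨le_csSup hSbdd h0S, csSup_le hSne fun s hs => hs.1.2⟩
  have ht₀T : t₀ ∈ Icc 0 T := hsub ht₀mem
  have hφcont : ∀ s ∈ Icc 0 T, ContinuousAt φ s := fun s hs =>
    (hgc.continuousAt).sub (hf' s hs).continuousAt
  -- φ t₀ ≤ 0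
  have hφt₀le : φ t₀ ≤ 0 := by
    have hcl : t₀ ∈ closure S := csSup_mem_closure hSne hSbdd
    haveI hnb : (nhdsWithin t₀ S).NeBot := mem_closure_iff_nhdsWithin_neBot.1 hcl
    refine le_of_tendsto (((hφcont t₀ ht₀T).continuousWithinAt (s := S)).tendsto) ?_
    filter_upwards [self_mem_nhdsWithin] with s hs using hs.2
  -- t₀ < t
  have ht₀lt : t₀ < t := lt_of_le_of_ne ht₀mem.2 (by
    intro h; rw [h] at hφt₀le; linarith)
  -- φ > 0 on (t₀, t]
  have hφpos : ∀ s ∈ Ioc t₀ t, 0 < φ s := by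
    intro s hs
    by_contra hns
    push_neg at hns
    have : s ∈ S := ⟨⟨le_trans ht₀mem.1 hs.1.le, hs.2⟩, hns⟩
    exact absurd (le_csSup hSbdd this) (not_le.2 hs.1)
  -- φ t₀ ≥ 0 by right continuity
  have hφt₀ge : 0 ≤ φ t₀ := by
    haveI hnb : (nhdsWithin t₀ (Ioc t₀ t)).NeBot := by
      refine mem_closure_iff_nhdsWithin_neBot.1 ?_
      rw [closure_Ioc ht₀lt.ne]
      exact ⟨le_rfl, ht₀mem.2⟩
    refine ge_of_tendsto (((hφcont t₀ ht₀T).continuousWithinAt (s := Ioc t₀ t)).tendsto) ?_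
    filter_upwards [self_mem_nhdsWithin] with s hs using (hφpos s hs).le
  -- Gronwall on [t₀, t]
  have hmem : ∀ x ∈ Icc t₀ t, x ∈ Icc 0 T := fun x hx =>
    hsub ⟨le_trans ht₀mem.1 hx.1, hx.2⟩
  have hφ' : ∀ x ∈ Icc 0 T, HasDerivAt φ ((g x ^ 2 - a ^ 2) - (f x ^ 2 + k x)) x :=
    fun x hx => (hg' x).sub (hf' x hx)
  have hgron := le_gronwallBound_of_liminf_deriv_right_le
    (f := φ) (f' := fun x => (g x ^ 2 - a ^ 2) - (f x ^ 2 + k x))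
    (δ := 0) (K := C) (ε := 0) (a := t₀) (b := t)
    (fun x hx => (hφcont x (hmem x hx)).continuousWithinAt)
    (fun x hx r hr =>
      ((hφ' x (hmem x (Ico_subset_Icc_self hx))).hasDerivWithinAt.liminf_right_slope_le hr))
    hφt₀le
    (by
      intro x hx
      have hxT := hmem x (Ico_subset_Icc_self hx)
      have hkx := hk x hxT
      have hφx : 0 ≤ φ x := by
        rcases eq_or_lt_of_le hx.1 with h | h
        · rw [← h]; exact hφt₀ge
        · exact (hφpos x ⟨h, hx.2.le⟩).le
      have hsum : g x + f x ≤ C := by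
        have := hC x hxT
        calc g x + f x ≤ |g x + f x| := le_abs_self _
          _ ≤ C := by simpa using this
      have h1 : (g x ^ 2 - a ^ 2) - (f x ^ 2 + k x) ≤ g x ^ 2 - f x ^ 2 := by linarith
      have h2 : g x ^ 2 - f x ^ 2 = (g x + f x) * φ x := by simp [hφ]; ring
      calc (g x ^ 2 - a ^ 2) - (f x ^ 2 + k x) ≤ (g x + f x) * φ x := by rw [← h2]; exact h1
        _ ≤ C * φ x := mul_le_mul_of_nonneg_right hsum hφx
        _ = C * φ x + 0 := by ring)
  have := hgron t ⟨ht₀lt.le, le_rfl⟩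
  rw [gronwallBound_ε0] at this
  simp at this
  linarith
end

section
/- Define w, u : [0,∞) → ℝ by w(t) = (−1 − (e^t − 1)²)/(e^t − t)² and u(t) = (e^t·(t − 2) + 2)/(e^t − t)². Then for every t ≥ 0 and every s ∈ [0,1], w(t) + s·u(t) ≤ −1. -/
open Real Set

lemma key_f_nonpos (t : ℝ) (ht : 0 ≤ t) :
    t ^ 2 - 2 * t * Real.exp t + 2 * Real.exp t - 2 ≤ 0 := by
  rcases le_total t 1 with h1 | h1
  · have hb := Real.exp_bound' ht h1 (n := 4) (by norm_num)
    have hb' : Real.exp t ≤ 1 + t + t ^ 2 / 2 + t ^ 3 / 6 + 5 * t ^ 4 / 96 := by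
      simp only [Finset.sum_range_succ] at hb
      norm_num [Nat.factorial] at hb
      nlinarith [hb]
    nlinarith [pow_nonneg ht 3, pow_nonneg ht 4, pow_le_pow_of_le_one ht h1 (show 3 ≤ 4 by norm_num),
      Real.add_one_le_exp t, sq_nonneg t]
  · have he := Real.add_one_le_exp t
    nlinarith [sq_nonneg t]

/-- All sectional curvatures of the counterexample metric are at most `−1`:
with `w(t) = (−1 − (e^t − 1)²)/(e^t − t)²` and
`u(t) = (e^t·(t − 2) + 2)/(e^t − t)²`, one has `w(t) + s·u(t) ≤ −1` for every
`t ≥ 0` and `s ∈ [0,1]`. -/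
theorem curvature_upper_bound
    (w u : ℝ → ℝ)
    (hw : ∀ t : ℝ, 0 ≤ t → w t = (-1 - (Real.exp t - 1) ^ 2) / (Real.exp t - t) ^ 2)
    (hu : ∀ t : ℝ, 0 ≤ t → u t = (Real.exp t * (t - 2) + 2) / (Real.exp t - t) ^ 2) :
    ∀ t : ℝ, 0 ≤ t → ∀ s ∈ Icc (0 : ℝ) 1, w t + s * u t ≤ -1 := by
  intro t ht s hs
  obtain ⟨hs0, hs1⟩ := hs
  rw [hw t ht, hu t ht]
  have hE := Real.add_one_le_exp t
  have hEt : Real.exp t - t ≥ 1 := by linarith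
  have hD : (0:ℝ) < (Real.exp t - t) ^ 2 := by positivity
  rw [← mul_div_assoc, ← add_div, div_le_iff₀ hD]
  have hf := key_f_nonpos t ht
  -- A + D ≤ 0  and  A + B + D ≤ 0
  have h1 : (-1 - (Real.exp t - 1) ^ 2) + (Real.exp t - t) ^ 2 ≤ 0 := by nlinarith
  have h2 : (-1 - (Real.exp t - 1) ^ 2) + (Real.exp t * (t - 2) + 2)
      + (Real.exp t - t) ^ 2 ≤ 0 := by nlinarith
  nlinarith [mul_nonneg hs0 (neg_nonneg.2 h2), mul_nonneg (sub_nonneg.2 hs1) (neg_nonneg.2 h1)]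
end
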